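/- Let d ≥ 2, let s : {1,...,d} → ℝ satisfy s_1 = 1, s strictly increasing, s_i/i nonincreasing, and suppose s_{i+1}/(i+1) < λ < s_i/i for some i ∈ {1,...,d−1}, together with the strict concavity condition s_i − s_{i−1} > s_{i+1} − s_i > s_{i+2} − s_{i+1} (whenever the indices i−1 and i+2 lie in range, with s_0 = 0). Then the two-component vector y* (with y*_i, y*_{i+1} as in the explicit formulas and zeros elsewhere) is the UNIQUE optimal solution of: minimize Σ y_j subject to Σ s_j y_j = λ, Σ j·y_j ≤ 1, y ≥ 0. -/

import Mathlib

/-- Under strict concavity at i, the explicit two-component vector is the UNIQUE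
optimal solution of the LP. -/
theorem stmt_8 (d : ℕ) (hd : 2 ≤ d) (s : ℕ → ℝ) (hs0 : s 0 = 0) (hs1 : s 1 = 1)
    (hmono : ∀ j, j < d → s j < s (j + 1))
    (hratio : ∀ j, 1 ≤ j → j + 1 ≤ d → s (j + 1) / ((j : ℝ) + 1) ≤ s j / (j : ℝ))
    (hconc : ∀ j, 1 ≤ j → j + 1 ≤ d → s (j + 1) - s j ≤ s j - s (j - 1))
    (lam : ℝ) (i : ℕ) (hi1 : 1 ≤ i) (hid : i + 1 ≤ d)
    (hlo : s (i + 1) / ((i : ℝ) + 1) < lam) (hhi : lam < s i / (i : ℝ))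
    (hstrict1 : s i - s (i - 1) > s (i + 1) - s i)
    (hstrict2 : i + 2 ≤ d → s (i + 1) - s i > s (i + 2) - s (i + 1))
    (ystar : ℕ → ℝ)
    (hyi : ystar i = (1 / (i : ℝ)) * (lam - s (i + 1) / ((i : ℝ) + 1)) /
      (s i / (i : ℝ) - s (i + 1) / ((i : ℝ) + 1)))
    (hyi1 : ystar (i + 1) = (1 / ((i : ℝ) + 1)) * (s i / (i : ℝ) - lam) /
      (s i / (i : ℝ) - s (i + 1) / ((i : ℝ) + 1)))
    (hy0 : ∀ j, j ≠ i → j ≠ i + 1 → ystar j = 0) :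
    ((∀ j ∈ Finset.Icc 1 d, 0 ≤ ystar j) ∧
      (∑ j ∈ Finset.Icc 1 d, s j * ystar j) = lam ∧
      (∑ j ∈ Finset.Icc 1 d, (j : ℝ) * ystar j) ≤ 1) ∧
    (∀ y : ℕ → ℝ,
      (∀ j ∈ Finset.Icc 1 d, 0 ≤ y j) →
      (∑ j ∈ Finset.Icc 1 d, s j * y j) = lam →
      (∑ j ∈ Finset.Icc 1 d, (j : ℝ) * y j) ≤ 1 →
      (∑ j ∈ Finset.Icc 1 d, ystar j) ≤ (∑ j ∈ Finset.Icc 1 d, y j) ∧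
      ((∑ j ∈ Finset.Icc 1 d, y j) = (∑ j ∈ Finset.Icc 1 d, ystar j) →
        ∀ j ∈ Finset.Icc 1 d, y j = ystar j)) := by
  have hiR : (0:ℝ) < (i:ℝ) := by exact_mod_cast hi1
  have hiR0 : (i:ℝ) ≠ 0 := ne_of_gt hiR
  have hi1R : (0:ℝ) < (i:ℝ) + 1 := by positivity
  have hi1R0 : (i:ℝ) + 1 ≠ 0 := ne_of_gt hi1R
  have hab : s (i+1) / ((i:ℝ)+1) < s i / (i:ℝ) := lt_trans hlo hhi
  have hD : (0:ℝ) < s i / (i:ℝ) - s (i+1) / ((i:ℝ)+1) := sub_pos.2 hab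
  have hDne : s i / (i:ℝ) - s (i+1) / ((i:ℝ)+1) ≠ 0 := ne_of_gt hD
  set Δ : ℝ := s (i+1) - s i with hΔdef
  have hΔ : 0 < Δ := sub_pos.2 (hmono i (by omega))
  have hcival : s i - (i:ℝ) * Δ
      = (i:ℝ) * ((i:ℝ)+1) * (s i / (i:ℝ) - s (i+1) / ((i:ℝ)+1)) := by
    rw [hΔdef]; field_simp; ring
  have hcpos : 0 < s i - (i:ℝ) * Δ := by rw [hcival]; positivity
  have hci1 : s (i+1) - ((i:ℝ)+1) * Δ = s i - (i:ℝ) * Δ := by rw [hΔdef]; ring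
  -- increments are nonincreasing
  have tmono : ∀ k j : ℕ, 1 ≤ j → j ≤ k → k + 1 ≤ d →
      s (k+1) - s k ≤ s (j+1) - s j := by
    intro k
    induction k with
    | zero => intro j hj hjk _; omega
    | succ n ih =>
      intro j hj hjk hk
      rcases Nat.lt_or_ge j (n+1) with h | h
      · have h1 := ih j hj (by omega) (by omega)
        have h2 := hconc (n+1) (by omega) (by omega)
        simp only [Nat.add_sub_cancel] at h2
        linarith
      · have hje : j = n+1 := by omega
        subst hje
        exact le_refl _
  have step_lo : ∀ j : ℕ, 1 ≤ j → j < i → Δ < s (j+1) - s j := by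
    intro j hj hji
    have h1 := tmono (i-1) j hj (by omega) (by omega)
    have hrw : i - 1 + 1 = i := by omega
    rw [hrw] at h1
    linarith [hstrict1]
  have step_hi : ∀ k : ℕ, i + 1 ≤ k → k + 1 ≤ d → s (k+1) - s k < Δ := by
    intro k hk hkd
    have h1 := tmono k (i+1) (by omega) hk hkd
    have h2 := hstrict2 (by omega)
    linarith
  have clow : ∀ n : ℕ, ∀ j : ℕ, 1 ≤ j → j + n = i →
      (s j - (j:ℝ)*Δ ≤ s i - (i:ℝ)*Δ) ∧
      (j < i → s j - (j:ℝ)*Δ < s i - (i:ℝ)*Δ) := by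
    intro n
    induction n with
    | zero =>
      intro j hj hji
      have hje : j = i := by omega
      subst hje
      exact ⟨le_refl _, fun h => absurd h (lt_irrefl _)⟩
    | succ m ih =>
      intro j hj hji
      have hji' : j < i := by omega
      have h1 : Δ < s (j+1) - s j := step_lo j hj hji'
      have h2 := ih (j+1) (by omega) (by omega)
      have hc : s j - (j:ℝ)*Δ < s (j+1) - (((j:ℕ)+1 : ℕ):ℝ)*Δ := by
        push_cast; linarith
      exact ⟨le_of_lt (lt_of_lt_of_le hc h2.1), fun _ => lt_of_lt_of_le hc h2.1⟩
  have chigh : ∀ j : ℕ, ∀ _ : i + 1 ≤ j, j ≤ d →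
      (s j - (j:ℝ)*Δ ≤ s i - (i:ℝ)*Δ) ∧
      (i + 2 ≤ j → s j - (j:ℝ)*Δ < s i - (i:ℝ)*Δ) := by
    intro j hij
    induction j, hij using Nat.le_induction with
    | base =>
      intro _
      have hc : s (i+1) - (((i:ℕ)+1 : ℕ):ℝ)*Δ = s i - (i:ℝ)*Δ := by push_cast; linarith [hci1]
      exact ⟨le_of_eq hc, fun h => absurd h (by omega)⟩
    | succ k hk ih =>
      intro hkd
      have h1 : s (k+1) - s k < Δ := step_hi k hk hkd
      have h2 := ih (by omega)
      have hc : s (k+1) - (((k:ℕ)+1 : ℕ):ℝ)*Δ < s k - (k:ℝ)*Δ := by push_cast; linarith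
      exact ⟨le_of_lt (lt_of_lt_of_le hc h2.1), fun _ => lt_of_lt_of_le hc h2.1⟩
  have cle : ∀ j : ℕ, 1 ≤ j → j ≤ d → s j - (j:ℝ)*Δ ≤ s i - (i:ℝ)*Δ := by
    intro j h1 h2
    rcases Nat.lt_or_ge j (i+1) with h | h
    · exact (clow (i - j) j h1 (by omega)).1
    · exact (chigh j h h2).1
  have clt : ∀ j : ℕ, 1 ≤ j → j ≤ d → j ≠ i → j ≠ i+1 →
      s j - (j:ℝ)*Δ < s i - (i:ℝ)*Δ := by
    intro j h1 h2 h3 h4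
    rcases Nat.lt_or_ge j (i+1) with h | h
    · exact (clow (i - j) j h1 (by omega)).2 (by omega)
    · exact (chigh j h h2).2 (by omega)
  -- sum reduction
  have hpair : ({i, i+1} : Finset ℕ) ⊆ Finset.Icc 1 d := by
    intro x hx
    simp only [Finset.mem_insert, Finset.mem_singleton] at hx
    simp only [Finset.mem_Icc]
    omega
  have sum_two : ∀ (f g : ℕ → ℝ), (∀ j ∈ Finset.Icc 1 d, j ≠ i → j ≠ i+1 → g j = 0) →
      (∑ j ∈ Finset.Icc 1 d, f j * g j) = f i * g i + f (i+1) * g (i+1) := by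
    intro f g hg
    rw [← Finset.sum_subset hpair, Finset.sum_pair (show i ≠ i+1 by omega)]
    intro x hx hx2
    simp only [Finset.mem_insert, Finset.mem_singleton, not_or] at hx2
    rw [hg x hx hx2.1 hx2.2, mul_zero]
  have hy0' : ∀ j ∈ Finset.Icc 1 d, j ≠ i → j ≠ i+1 → ystar j = 0 := fun j _ h1 h2 => hy0 j h1 h2
  -- key identities for ystar
  have hne2 : s i * ((i:ℝ)+1) - (i:ℝ) * s (i+1) ≠ 0 := by
    have h := (div_lt_div_iff₀ hi1R hiR).mp hab
    intro hcon
    nlinarith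
  have hDalt : s i / (i:ℝ) - s (i+1) / ((i:ℝ)+1)
      = (s i * ((i:ℝ)+1) - (i:ℝ) * s (i+1)) / ((i:ℝ) * ((i:ℝ)+1)) :=
    div_sub_div _ _ hiR0 hi1R0
  have hkey1 : s i * ystar i + s (i+1) * ystar (i+1) = lam := by
    rw [hyi, hyi1, hDalt]; field_simp; ring
  have hkey2 : (i:ℝ) * ystar i + ((i:ℝ)+1) * ystar (i+1) = 1 := by
    rw [hyi, hyi1, hDalt]; field_simp
    have hX : (-((i:ℝ) * s (i + 1)) + (i:ℝ) * s i + s i) ≠ 0 := by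
      intro h; apply hne2; linarith
    linear_combination mul_inv_cancel₀ hX
  have hsum_s : (∑ j ∈ Finset.Icc 1 d, s j * ystar j) = lam := by
    rw [sum_two s ystar hy0']; exact hkey1
  have hsum_j : (∑ j ∈ Finset.Icc 1 d, (j:ℝ) * ystar j) = 1 := by
    rw [sum_two (fun j => (j:ℝ)) ystar hy0']; push_cast; exact hkey2
  have hsum_y : (∑ j ∈ Finset.Icc 1 d, ystar j) = ystar i + ystar (i+1) := by
    have h := sum_two (fun _ => (1:ℝ)) ystar hy0'
    simpa using h
  have hyi_nn : 0 ≤ ystar i := by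
    rw [hyi]
    apply div_nonneg _ (le_of_lt hD)
    apply mul_nonneg (by positivity) (by linarith)
  have hyi1_nn : 0 ≤ ystar (i+1) := by
    rw [hyi1]
    apply div_nonneg _ (le_of_lt hD)
    apply mul_nonneg (by positivity) (by linarith)
  have hstar_val : (s i - (i:ℝ)*Δ) * (ystar i + ystar (i+1)) = lam - Δ := by
    linear_combination hkey1 - Δ * hkey2 - ystar (i+1) * hci1
  have hstar_sum : (s i - (i:ℝ)*Δ) * (∑ j ∈ Finset.Icc 1 d, ystar j) = lam - Δ := by
    rw [hsum_y]; exact hstar_val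
  refine ⟨⟨?_, hsum_s, le_of_eq hsum_j⟩, ?_⟩
  · intro j hj
    rcases eq_or_ne j i with h | h
    · subst h; exact hyi_nn
    rcases eq_or_ne j (i+1) with h' | h'
    · subst h'; exact hyi1_nn
    · rw [hy0 j h h']
  · intro y hpos hfeq hfle
    have hterm : ∀ j ∈ Finset.Icc 1 d, (s j - (j:ℝ)*Δ) * y j ≤ (s i - (i:ℝ)*Δ) * y j := by
      intro j hj
      have hm := Finset.mem_Icc.mp hj
      exact mul_le_mul_of_nonneg_right (cle j hm.1 hm.2) (hpos j hj)
    have hsplit : (∑ j ∈ Finset.Icc 1 d, (s j - (j:ℝ)*Δ) * y j)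
        = lam - Δ * (∑ j ∈ Finset.Icc 1 d, (j:ℝ) * y j) := by
      rw [Finset.mul_sum, ← hfeq, ← Finset.sum_sub_distrib]
      apply Finset.sum_congr rfl
      intro j _
      ring
    have hlb : lam - Δ ≤ (s i - (i:ℝ)*Δ) * (∑ j ∈ Finset.Icc 1 d, y j) := by
      have h1 := Finset.sum_le_sum hterm
      rw [hsplit] at h1
      rw [Finset.mul_sum]
      have h2 : Δ * (∑ j ∈ Finset.Icc 1 d, (j:ℝ) * y j) ≤ Δ * 1 :=
        mul_le_mul_of_nonneg_left hfle (le_of_lt hΔ)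
      rw [mul_one] at h2
      linarith
    have hle : (∑ j ∈ Finset.Icc 1 d, ystar j) ≤ (∑ j ∈ Finset.Icc 1 d, y j) := by
      rw [← mul_le_mul_iff_right₀ hcpos, hstar_sum]
      exact hlb
    refine ⟨hle, ?_⟩
    intro heq
    have heq' : (s i - (i:ℝ)*Δ) * (∑ j ∈ Finset.Icc 1 d, y j) = lam - Δ := by
      rw [heq, hstar_sum]
    have hnn : ∀ j ∈ Finset.Icc 1 d, 0 ≤ ((s i - (i:ℝ)*Δ) - (s j - (j:ℝ)*Δ)) * y j := by
      intro j hj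
      have hm := Finset.mem_Icc.mp hj
      exact mul_nonneg (by linarith [cle j hm.1 hm.2]) (hpos j hj)
    have e1 : (∑ j ∈ Finset.Icc 1 d, ((s i - (i:ℝ)*Δ) - (s j - (j:ℝ)*Δ)) * y j)
        = (s i - (i:ℝ)*Δ) * (∑ j ∈ Finset.Icc 1 d, y j)
          - (∑ j ∈ Finset.Icc 1 d, (s j - (j:ℝ)*Δ) * y j) := by
      rw [Finset.mul_sum, ← Finset.sum_sub_distrib]
      apply Finset.sum_congr rfl
      intro j _
      ring
    have hslack : (∑ j ∈ Finset.Icc 1 d, ((s i - (i:ℝ)*Δ) - (s j - (j:ℝ)*Δ)) * y j)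
        + Δ * (1 - ∑ j ∈ Finset.Icc 1 d, (j:ℝ) * y j) = 0 := by
      rw [e1, hsplit, heq']; ring
    have h2nn : 0 ≤ Δ * (1 - ∑ j ∈ Finset.Icc 1 d, (j:ℝ) * y j) :=
      mul_nonneg (le_of_lt hΔ) (by linarith)
    have hsz : (∑ j ∈ Finset.Icc 1 d, ((s i - (i:ℝ)*Δ) - (s j - (j:ℝ)*Δ)) * y j) = 0 := by
      have h3 := Finset.sum_nonneg hnn
      linarith
    have hjsum1 : (∑ j ∈ Finset.Icc 1 d, (j:ℝ) * y j) = 1 := by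
      have h4 : Δ * (1 - ∑ j ∈ Finset.Icc 1 d, (j:ℝ) * y j) = 0 := by linarith
      rcases mul_eq_zero.mp h4 with h | h
      · exact absurd h (ne_of_gt hΔ)
      · linarith
    have hyz : ∀ k ∈ Finset.Icc 1 d, k ≠ i → k ≠ i+1 → y k = 0 := by
      intro k hk h1 h2
      have h3 := (Finset.sum_eq_zero_iff_of_nonneg hnn).mp hsz k hk
      have hm := Finset.mem_Icc.mp hk
      have h4 : 0 < (s i - (i:ℝ)*Δ) - (s k - (k:ℝ)*Δ) := by
        linarith [clt k hm.1 hm.2 h1 h2]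
      rcases mul_eq_zero.mp h3 with h | h
      · exact absurd h (ne_of_gt h4)
      · exact h
    have hy1 : s i * y i + s (i+1) * y (i+1) = lam := by
      rw [← sum_two s y hyz]; exact hfeq
    have hy2 : (i:ℝ) * y i + ((i:ℝ)+1) * y (i+1) = 1 := by
      have h := sum_two (fun j => (j:ℝ)) y hyz
      rw [h] at hjsum1
      push_cast at hjsum1
      exact hjsum1
    have hdetpos : 0 < ((i:ℝ)+1) * s i - (i:ℝ) * s (i+1) := by
      have h := (div_lt_div_iff₀ hi1R hiR).mp hab
      linarith
    have hu : y i = ystar i := by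
      have e2 : (((i:ℝ)+1) * s i - (i:ℝ) * s (i+1)) * (y i - ystar i) = 0 := by
        linear_combination ((i:ℝ)+1) * hy1 - s (i+1) * hy2 - ((i:ℝ)+1) * hkey1 + s (i+1) * hkey2
      rcases mul_eq_zero.mp e2 with h | h
      · exact absurd h (ne_of_gt hdetpos)
      · linarith
    have hv : y (i+1) = ystar (i+1) := by
      have e3 : ((i:ℝ)+1) * (y (i+1) - ystar (i+1)) = 0 := by
        linear_combination hy2 - hkey2 - (i:ℝ) * hu
      rcases mul_eq_zero.mp e3 with h | h
      · exact absurd h hi1R0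
      · linarith
    intro j hj
    rcases eq_or_ne j i with h | h
    · subst h; exact hu
    rcases eq_or_ne j (i+1) with h' | h'
    · subst h'; exact hv
    · rw [hyz j hj h h', hy0 j h h']
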